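/- Let 0 ≤ α_1, α_2, α_3, α_4 ≤ 1 and 0 < ε ≤ 1/1000 be reals, and define G(α_1,α_2,α_3,α_4) := Σ over (j_1,j_2,j_3,j_4) ∈ F_2^4 with j_1+j_2+j_3+j_4 = 0 of ∏_{i=1}^4 α_{i,j_i}^{3/4}, where α_{i,0} := α_i and α_{i,1} := 1−α_i. If G(α_1,α_2,α_3,α_4) ≥ 1−ε, then either all four α_i are within 3√ε of 1/2, or all four quantities min(α_i, 1−α_i) are at most 10ε. -/

import Mathlib

open Finset

/-- G(α₁,α₂,α₃,α₄) := Σ over (j₁,j₂,j₃,j₄) ∈ 𝔽₂⁴ with j₁+j₂+j₃+j₄ = 0 of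
∏ᵢ α_{i,jᵢ}^{3/4}, where α_{i,0} := αᵢ and α_{i,1} := 1-αᵢ. -/
noncomputable def G (α : Fin 4 → ℝ) : ℝ :=
  ∑ j : Fin 4 → ZMod 2,
    if j 0 + j 1 + j 2 + j 3 = 0 then
      ∏ i, (if j i = 0 then α i else 1 - α i) ^ ((3 : ℝ) / 4)
    else 0

set_option maxHeartbeats 1000000

noncomputable def fr (t : ℝ) : ℝ := t ^ ((3:ℝ)/4) + (1-t) ^ ((3:ℝ)/4)
noncomputable def gr (t : ℝ) : ℝ := t ^ ((3:ℝ)/4) - (1-t) ^ ((3:ℝ)/4)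

lemma Gexp (α : Fin 4 → ℝ) :
    G α = (fr (α 0) * fr (α 1) * fr (α 2) * fr (α 3)
         + gr (α 0) * gr (α 1) * gr (α 2) * gr (α 3)) / 2 := by
  rw [G, ← Finset.sum_filter]
  rw [show (univ.filter (fun j : Fin 4 → ZMod 2 => j 0 + j 1 + j 2 + j 3 = 0)) =
      ({![0,0,0,0], ![0,0,1,1], ![0,1,0,1], ![0,1,1,0],
        ![1,0,0,1], ![1,0,1,0], ![1,1,0,0], ![1,1,1,1]} : Finset (Fin 4 → ZMod 2)) from by decide]
  rw [Finset.sum_insert (by decide), Finset.sum_insert (by decide),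
      Finset.sum_insert (by decide), Finset.sum_insert (by decide),
      Finset.sum_insert (by decide), Finset.sum_insert (by decide),
      Finset.sum_insert (by decide), Finset.sum_singleton]
  simp only [Fin.prod_univ_four, Matrix.cons_val_zero, Matrix.cons_val_one, Matrix.head_cons,
    Matrix.cons_val_two, Matrix.tail_cons, Matrix.cons_val_three]
  norm_num [fr, gr]
  ring

lemma coord (x : ℝ) (h0 : 0 ≤ x) (h1 : x ≤ 1) :
    ∃ p q : ℝ, 0 ≤ p ∧ p ≤ q ∧ p^4 + q^4 = 1 ∧ p^4 = min x (1-x) ∧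
      fr x = p^3 + q^3 ∧ |gr x| = q^3 - p^3 := by
  have key : ∀ t : ℝ, 0 ≤ t → (t ^ ((1:ℝ)/4))^3 = t ^ ((3:ℝ)/4) := by
    intro t ht
    rw [← Real.rpow_natCast (t ^ ((1:ℝ)/4)) 3, ← Real.rpow_mul ht]
    norm_num
  have key4 : ∀ t : ℝ, 0 ≤ t → (t ^ ((1:ℝ)/4))^4 = t := by
    intro t ht
    rw [← Real.rpow_natCast (t ^ ((1:ℝ)/4)) 4, ← Real.rpow_mul ht]
    norm_num
  rcases le_total x (1-x) with h | h
  · refine ⟨x ^ ((1:ℝ)/4), (1-x) ^ ((1:ℝ)/4), Real.rpow_nonneg h0 _,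
      Real.rpow_le_rpow h0 h (by norm_num), ?_, ?_, ?_, ?_⟩
    · rw [key4 _ h0, key4 _ (by linarith)]; ring
    · rw [key4 _ h0, min_eq_left h]
    · rw [fr, key _ h0, key _ (by linarith)]
    · rw [gr, key _ h0, key _ (by linarith), abs_of_nonpos (by
        have := Real.rpow_le_rpow h0 h (by norm_num : (0:ℝ) ≤ 3/4); linarith)]
      ring
  · refine ⟨(1-x) ^ ((1:ℝ)/4), x ^ ((1:ℝ)/4), Real.rpow_nonneg (by linarith) _,
      Real.rpow_le_rpow (by linarith) h (by norm_num), ?_, ?_, ?_, ?_⟩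
    · rw [key4 _ h0, key4 _ (by linarith)]; ring
    · rw [key4 _ (by linarith), min_eq_right h]
    · rw [fr, key _ h0, key _ (by linarith)]; ring
    · rw [gr, key _ h0, key _ (by linarith), abs_of_nonneg (by
        have := Real.rpow_le_rpow (by linarith : (0:ℝ) ≤ 1-x) h (by norm_num : (0:ℝ) ≤ 3/4); linarith)]

lemma p_small (p : ℝ) (hp : 0 ≤ p) (h : p^4 ≤ 1/200) : p ≤ 266/1000 := by
  by_contra hc
  push_neg at hc
  nlinarith [pow_lt_pow_left₀ hc (by norm_num : (0:ℝ) ≤ 266/1000) (by norm_num : 4 ≠ 0)]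

lemma pow4_le_one (q : ℝ) (h0 : 0 ≤ q) (h : q^4 ≤ 1) : q ≤ 1 := by
  by_contra hc
  push_neg at hc
  nlinarith [one_lt_pow₀ hc (by norm_num : 4 ≠ 0)]

lemma h6_le_one (p q : ℝ) (hp : 0 ≤ p) (hpq : p ≤ q) (h1 : p^4 + q^4 = 1) :
    p^6 + q^6 ≤ 1 := by
  have hq : 0 ≤ q := hp.trans hpq
  have hq1 : q ≤ 1 := pow4_le_one q hq (by nlinarith [sq_nonneg (p^2)])
  have hp1 : p ≤ 1 := hpq.trans hq1
  nlinarith [mul_nonneg (pow_nonneg hp 4) (by nlinarith : (0:ℝ) ≤ 1 - p^2),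
    mul_nonneg (pow_nonneg hq 4) (by nlinarith : (0:ℝ) ≤ 1 - q^2)]

lemma wcub (s : ℝ) (hlo : 141/2000 ≤ s) (hhi : s ≤ 49/100) : 21/5000 ≤ s^2*(1-2*s) := by
  nlinarith [mul_nonneg (mul_nonneg (by linarith : (0:ℝ) ≤ s - 141/2000)
    (by linarith : (0:ℝ) ≤ 49/100 - s)) (by linarith : (0:ℝ) ≤ 2*s + 121/1000)]

lemma wmid (p q : ℝ) (hp : 0 ≤ p) (hpq : p ≤ q) (h1 : p^4 + q^4 = 1)
    (hlo : 1/200 ≤ p^4) (hhi : p^4 ≤ 2/5) : 21/5000 ≤ (p^2*q^2)^2 * (1 - 2*(p^2*q^2)) := by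
  have hq : 0 ≤ q := hp.trans hpq
  have hs0 : 0 ≤ p^2*q^2 := by positivity
  have hs2lo : 199/40000 ≤ (p^2*q^2)^2 := by
    nlinarith [mul_nonneg (by linarith : (0:ℝ) ≤ p^4 - 1/200)
      (by nlinarith [sq_nonneg (p^2 - q^2)] : (0:ℝ) ≤ 199/200 - p^4)]
  have hs2hi : (p^2*q^2)^2 ≤ 6/25 := by
    nlinarith [mul_nonneg (by linarith : (0:ℝ) ≤ 2/5 - p^4)
      (by nlinarith [sq_nonneg (p^2 - q^2)] : (0:ℝ) ≤ 3/5 - p^4)]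
  have hslo : 141/2000 ≤ p^2*q^2 := by nlinarith [hs2lo, hs0]
  have hshi : p^2*q^2 ≤ 49/100 := by nlinarith [hs2hi, hs0]
  exact wcub _ hslo hshi

lemma C1lem (p q p' q' : ℝ) (hp : 0 ≤ p) (hpq : p ≤ q) (h1 : p^4 + q^4 = 1)
    (hp' : 0 ≤ p') (hpq' : p' ≤ q') (h1' : p'^4 + q'^4 = 1)
    (hB : p^4 ≤ 1/200) (hC1 : 2/5 ≤ p'^4) :
    (p^6+q^6)*(p'^6+q'^6) + 4*(p^3*q^3*(p'^3*q'^3)) ≤ 3/4 := by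
  have hq : 0 ≤ q := hp.trans hpq
  have hq' : 0 ≤ q' := hp'.trans hpq'
  have hq1 : q ≤ 1 := pow4_le_one q hq (by nlinarith [sq_nonneg (p^2)])
  have hq1' : q' ≤ 1 := pow4_le_one q' hq' (by nlinarith [sq_nonneg (p'^2)])
  have hple : p ≤ 266/1000 := p_small p hp hB
  have hm2' : p'^4 ≤ 1/2 := by nlinarith [pow_le_pow_left₀ hp' hpq' 4]
  have hs' : p'^2*q'^2 ≤ 1/2 := by nlinarith [sq_nonneg (p'^2 - q'^2)]
  have hs0' : 0 ≤ p'^2*q'^2 := by positivity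
  have hw0' : 0 ≤ (p'^2*q'^2)^2 * (1 - 2*(p'^2*q'^2)) := by
    apply mul_nonneg (sq_nonneg _); linarith
  have e1' : (p'^6+q'^6)^2 + 4*p'^6*q'^6 = 1 - 3*(p'^2*q'^2)^2 + 6*(p'^2*q'^2)^3 := by
    linear_combination ((p'^4+q'^4)^2 + (p'^4+q'^4) + 1 - 3*p'^4*q'^4) * h1'
  have hs2' : 6/25 ≤ (p'^2*q'^2)^2 := by
    nlinarith [mul_nonneg (by linarith : (0:ℝ) ≤ p'^4 - 2/5) (by linarith : (0:ℝ) ≤ 3/5 - p'^4)]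
  have hh2' : (p'^6+q'^6)^2 ≤ 13/25 := by nlinarith [e1', hs2', hw0']
  have hhn' : (0:ℝ) ≤ p'^6+q'^6 := by positivity
  have hh' : p'^6+q'^6 ≤ 722/1000 := by nlinarith [sq_nonneg (p'^6+q'^6 - 722/1000), hh2']
  have hh1 : p^6+q^6 ≤ 1 := h6_le_one p q hp hpq h1
  have hhn : (0:ℝ) ≤ p^6+q^6 := by positivity
  have hp2 : p^2 ≤ 70756/1000000 := by nlinarith [hple, hp]
  have hp3 : p^3 ≤ 19/1000 := by nlinarith [mul_le_mul hp2 hple hp (by norm_num : (0:ℝ) ≤ 70756/1000000)]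
  have hq3 : q^3 ≤ 1 := by nlinarith [hq1, hq, sq_nonneg q]
  have hr : p^3*q^3 ≤ 19/1000 := by
    nlinarith [mul_le_mul hp3 hq3 (by positivity) (by norm_num : (0:ℝ) ≤ 19/1000)]
  have hrn : (0:ℝ) ≤ p^3*q^3 := by positivity
  have hrn' : (0:ℝ) ≤ p'^3*q'^3 := by positivity
  have hs'3 : (p'^2*q'^2)^3 ≤ 1/8 := by
    nlinarith [hs', hs0', sq_nonneg (p'^2*q'^2 - 1/2), sq_nonneg (p'^2*q'^2 + 1/2)]
  have hr'2 : (p'^3*q'^3)^2 ≤ 1/8 := by nlinarith [hs'3]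
  have hr' : p'^3*q'^3 ≤ 36/100 := by nlinarith [sq_nonneg (p'^3*q'^3 - 36/100), hr'2]
  have t1 : (p^6+q^6)*(p'^6+q'^6) ≤ 722/1000 :=
    (mul_le_mul hh1 hh' hhn' (by norm_num)).trans_eq (by ring)
  have t2 : (p^3*q^3)*(p'^3*q'^3) ≤ (19/1000)*(36/100) :=
    mul_le_mul hr hr' hrn' (by norm_num)
  nlinarith [t1, t2]

lemma C3lem (d p q p' q' : ℝ) (hd1 : d^2 ≤ 1/1000)
    (hp : 0 ≤ p) (hpq : p ≤ q) (h1 : p^4 + q^4 = 1)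
    (hp' : 0 ≤ p') (hpq' : p' ≤ q') (h1' : p'^4 + q'^4 = 1)
    (hB : p^4 ≤ 1/200) (hC3 : p'^4 ≤ 1/200) (hm' : 10*d^2 ≤ p'^4) :
    (p^6+q^6)*(p'^6+q'^6) + 4*(p^3*q^3*(p'^3*q'^3)) ≤ 1 - 4*d^2 := by
  have hq : 0 ≤ q := hp.trans hpq
  have hq' : 0 ≤ q' := hp'.trans hpq'
  have hq1 : q ≤ 1 := pow4_le_one q hq (by nlinarith [sq_nonneg (p^2)])
  have hq1' : q' ≤ 1 := pow4_le_one q' hq' (by nlinarith [sq_nonneg (p'^2)])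
  have hple : p ≤ 266/1000 := p_small p hp hB
  have hple' : p' ≤ 266/1000 := p_small p' hp' hC3
  have hp4n : (0:ℝ) ≤ p^4 := by positivity
  have hp4n' : (0:ℝ) ≤ p'^4 := by positivity
  have hq2le : q^2 ≤ 1 := by nlinarith
  have hq2le' : q'^2 ≤ 1 := by nlinarith
  have hp2 : p^2 ≤ 70756/1000000 := by nlinarith [hple, hp]
  have hp2' : p'^2 ≤ 70756/1000000 := by nlinarith [hple', hp']
  have hhle : p^6+q^6 ≤ 1 - (14/10)*p^4 := by
    have hq4 : 199/200 ≤ q^4 := by linarith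
    have h2q : p^4 ≤ 2*(1-q^2) := by nlinarith [sq_nonneg (1 - q^2)]
    have t1 : (199/200)*(p^4/2) ≤ q^4*(1-q^2) :=
      mul_le_mul hq4 (by linarith) (by linarith) (by positivity)
    have t2 : p^4*p^2 ≤ p^4*(70756/1000000) :=
      mul_le_mul (le_refl _) hp2 (by positivity) hp4n
    nlinarith [t1, t2]
  have hhle' : p'^6+q'^6 ≤ 1 - (14/10)*p'^4 := by
    have hq4 : 199/200 ≤ q'^4 := by linarith
    have h2q' : p'^4 ≤ 2*(1-q'^2) := by nlinarith [sq_nonneg (1 - q'^2)]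
    have t1 : (199/200)*(p'^4/2) ≤ q'^4*(1-q'^2) :=
      mul_le_mul hq4 (by linarith) (by linarith) (by positivity)
    have t2 : p'^4*p'^2 ≤ p'^4*(70756/1000000) :=
      mul_le_mul (le_refl _) hp2' (by positivity) hp4n'
    nlinarith [t1, t2]
  have hpp' : p*p' ≤ 70756/1000000 := by
    nlinarith [mul_le_mul hple hple' hp' (by norm_num : (0:ℝ) ≤ 266/1000)]
  have hppn : 0 ≤ p*p' := mul_nonneg hp hp'
  have hq3 : q^3 ≤ 1 := by nlinarith [hq1, hq, sq_nonneg q]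
  have hq3' : q'^3 ≤ 1 := by nlinarith [hq1', hq', sq_nonneg q']
  have cr1 : p^3*q^3*(p'^3*q'^3) ≤ (p*p')^3 := by
    have hqq : q^3*q'^3 ≤ 1 := by
      nlinarith [mul_le_mul hq3 hq3' (by positivity) (by norm_num : (0:ℝ) ≤ 1)]
    nlinarith [mul_le_mul (le_refl ((p*p')^3)) hqq (by positivity) (by positivity)]
  have cr2 : (p*p')^3 ≤ (70756/1000000)*(p*p')^2 := by
    nlinarith [mul_le_mul (le_refl ((p*p')^2)) hpp' hppn (sq_nonneg (p*p'))]
  have cr3 : (p*p')^2 ≤ (p^4+p'^4)/2 := by nlinarith [sq_nonneg (p^2 - p'^2)]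
  have cross : 4*(p^3*q^3*(p'^3*q'^3)) ≤ (1416/10000)*(p^4+p'^4) := by
    nlinarith [cr1, cr2, cr3, hppn, sq_nonneg (p*p')]
  have hhn' : (0:ℝ) ≤ p'^6+q'^6 := by positivity
  have hprod : (p^6+q^6)*(p'^6+q'^6) ≤ (1 - (14/10)*p^4)*(1 - (14/10)*p'^4) :=
    mul_le_mul hhle hhle' hhn' (by nlinarith)
  have hmm' : p^4*p'^4 ≤ (1/200)*p'^4 :=
    mul_le_mul hB (le_refl _) hp4n' (by norm_num)
  nlinarith [hprod, cross, hmm', hm', hp4n, hp4n']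

lemma Nlem (p q p' q' : ℝ) (hp : 0 ≤ p) (hpq : p ≤ q) (h1 : p^4 + q^4 = 1)
    (hp' : 0 ≤ p') (hpq' : p' ≤ q') (h1' : p'^4 + q'^4 = 1) :
    ((p^3+q^3)*(p'^3+q'^3))^2 + ((q^3-p^3)*(q'^3-p'^3))^2 ≤ 2 := by
  have hq : 0 ≤ q := hp.trans hpq
  have hq' : 0 ≤ q' := hp'.trans hpq'
  have e1 : (p^6+q^6)^2 + 4*p^6*q^6 = 1 - 3*(p^2*q^2)^2 + 6*(p^2*q^2)^3 := by
    linear_combination ((p^4+q^4)^2 + (p^4+q^4) + 1 - 3*p^4*q^4) * h1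
  have e1' : (p'^6+q'^6)^2 + 4*p'^6*q'^6 = 1 - 3*(p'^2*q'^2)^2 + 6*(p'^2*q'^2)^3 := by
    linear_combination ((p'^4+q'^4)^2 + (p'^4+q'^4) + 1 - 3*p'^4*q'^4) * h1'
  have hs : p^2*q^2 ≤ 1/2 := by nlinarith [sq_nonneg (p^2 - q^2)]
  have hs' : p'^2*q'^2 ≤ 1/2 := by nlinarith [sq_nonneg (p'^2 - q'^2)]
  have hs0 : 0 ≤ p^2*q^2 := by positivity
  have hs0' : 0 ≤ p'^2*q'^2 := by positivity
  have hw : 0 ≤ (p^2*q^2)^2 * (1 - 2*(p^2*q^2)) := by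
    apply mul_nonneg (sq_nonneg _); linarith
  have hw' : 0 ≤ (p'^2*q'^2)^2 * (1 - 2*(p'^2*q'^2)) := by
    apply mul_nonneg (sq_nonneg _); linarith
  nlinarith [sq_nonneg (p^6+q^6 - p'^6 - q'^6), sq_nonneg (2*p^3*q^3 - 2*p'^3*q'^3),
    e1, e1', hw, hw']

lemma Mlem (d p q p' q' : ℝ) (hd : 0 < d) (hd1 : d^2 ≤ 1/1000)
    (hp : 0 ≤ p) (hpq : p ≤ q) (h1 : p^4 + q^4 = 1)
    (hp' : 0 ≤ p') (hpq' : p' ≤ q') (h1' : p'^4 + q'^4 = 1)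
    (hm : p^4 ≤ 1/2 - 3*d) (hm' : 10*d^2 ≤ p'^4) :
    ((p^3+q^3)*(p'^3+q'^3))^2 + ((q^3-p^3)*(q'^3-p'^3))^2 ≤ 2 - 8*d^2 := by
  have hq : 0 ≤ q := hp.trans hpq
  have hq' : 0 ≤ q' := hp'.trans hpq'
  have hq1 : q ≤ 1 := pow4_le_one q hq (by nlinarith [sq_nonneg (p^2)])
  have hq1' : q' ≤ 1 := pow4_le_one q' hq' (by nlinarith [sq_nonneg (p'^2)])
  have hs : p^2*q^2 ≤ 1/2 := by nlinarith [sq_nonneg (p^2 - q^2)]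
  have hs' : p'^2*q'^2 ≤ 1/2 := by nlinarith [sq_nonneg (p'^2 - q'^2)]
  have hs0 : 0 ≤ p^2*q^2 := by positivity
  have hs0' : 0 ≤ p'^2*q'^2 := by positivity
  have e1 : (p^6+q^6)^2 + 4*p^6*q^6 = 1 - 3*(p^2*q^2)^2 + 6*(p^2*q^2)^3 := by
    linear_combination ((p^4+q^4)^2 + (p^4+q^4) + 1 - 3*p^4*q^4) * h1
  have e1' : (p'^6+q'^6)^2 + 4*p'^6*q'^6 = 1 - 3*(p'^2*q'^2)^2 + 6*(p'^2*q'^2)^3 := by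
    linear_combination ((p'^4+q'^4)^2 + (p'^4+q'^4) + 1 - 3*p'^4*q'^4) * h1'
  have hw0 : 0 ≤ (p^2*q^2)^2 * (1 - 2*(p^2*q^2)) := by
    apply mul_nonneg (sq_nonneg _); linarith
  have hw0' : 0 ≤ (p'^2*q'^2)^2 * (1 - 2*(p'^2*q'^2)) := by
    apply mul_nonneg (sq_nonneg _); linarith
  have CSle : (p^6+q^6)*(p'^6+q'^6) + 4*(p^3*q^3*(p'^3*q'^3)) ≤
      1 - (3/2)*((p^2*q^2)^2*(1-2*(p^2*q^2)) + (p'^2*q'^2)^2*(1-2*(p'^2*q'^2))) := by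
    nlinarith [sq_nonneg (p^6+q^6 - p'^6 - q'^6), sq_nonneg (2*p^3*q^3 - 2*p'^3*q'^3), e1, e1']
  suffices KEY : (p^6+q^6)*(p'^6+q'^6) + 4*(p^3*q^3*(p'^3*q'^3)) ≤ 1 - 4*d^2 by
    calc ((p^3+q^3)*(p'^3+q'^3))^2 + ((q^3-p^3)*(q'^3-p'^3))^2
        = 2*((p^6+q^6)*(p'^6+q'^6) + 4*(p^3*q^3*(p'^3*q'^3))) := by ring
      _ ≤ 2 - 8*d^2 := by linarith
  rcases le_or_gt (2/5 : ℝ) (p^4) with hA | hA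
  · have hs2 : 6/25 ≤ (p^2*q^2)^2 := by
      nlinarith [mul_nonneg (by linarith : (0:ℝ) ≤ p^4 - 2/5) (by linarith : (0:ℝ) ≤ 3/5 - p^4)]
    have h6d : 6*d ≤ q^4 - p^4 := by linarith
    have hd36 : 36*d^2 ≤ (q^4-p^4)^2 := by nlinarith [h6d, hd]
    have hsle : 18*d^2 ≤ 1 - 2*(p^2*q^2) := by nlinarith [hd36, hs]
    have hwA : 4*d^2 ≤ (3/2) * ((p^2*q^2)^2*(1-2*(p^2*q^2))) := by
      nlinarith [mul_le_mul hs2 hsle (by positivity) (sq_nonneg (p^2*q^2))]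
    linarith [CSle, hw0']
  · rcases le_or_gt (1/200 : ℝ) (p^4) with hB | hB
    · have hwB := wmid p q hp hpq h1 hB hA.le
      linarith [CSle, hw0']
    · rcases le_or_gt (2/5 : ℝ) (p'^4) with hC1 | hC'
      · have := C1lem p q p' q' hp hpq h1 hp' hpq' h1' hB.le hC1
        linarith
      · rcases le_or_gt (1/200 : ℝ) (p'^4) with hC2 | hC3
        · have hwC := wmid p' q' hp' hpq' h1' hC2 hC'.le
          linarith [CSle, hw0]
        · exact C3lem d p q p' q' hd1 hp hpq h1 hp' hpq' h1' hB.le hC3.le hm'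

lemma combine (d A1 B1 A2 B2 : ℝ) (hd : 0 < d)
    (hS : 2 - 2*d^2 ≤ A1*A2 + B1*B2) (hM : A1^2+B1^2 ≤ 2-8*d^2) (hN : A2^2+B2^2 ≤ 2) :
    False := by
  have h1 : 0 ≤ 2-2*d^2 := by nlinarith [sq_nonneg A1, sq_nonneg B1]
  have hsq : (2-2*d^2)^2 ≤ (A1*A2+B1*B2)^2 := by nlinarith [hS, h1]
  have hCS : (A1*A2+B1*B2)^2 ≤ (A1^2+B1^2)*(A2^2+B2^2) := by
    nlinarith [sq_nonneg (A1*B2 - A2*B1)]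
  have hprod : (A1^2+B1^2)*(A2^2+B2^2) ≤ (2-8*d^2)*2 :=
    mul_le_mul hM hN (by positivity) (by nlinarith [sq_nonneg A1, sq_nonneg B1])
  nlinarith [hsq, hCS, hprod, mul_pos hd hd, sq_nonneg (d^2)]

lemma core (d x y z w : ℝ) (hd : 0 < d) (hd1 : d^2 ≤ 1/1000)
    (hx0 : 0 ≤ x) (hx1 : x ≤ 1) (hy0 : 0 ≤ y) (hy1 : y ≤ 1)
    (hz0 : 0 ≤ z) (hz1 : z ≤ 1) (hw0 : 0 ≤ w) (hw1 : w ≤ 1)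
    (hxs : min x (1-x) ≤ 1/2 - 3*d)
    (hys : 10*d^2 ≤ min y (1-y))
    (hsum : 2 - 2*d^2 ≤ fr x * fr y * fr z * fr w + gr x * gr y * gr z * gr w) : False := by
  obtain ⟨p1,q1,hp1,hpq1,h11,hmin1,hf1,hg1⟩ := coord x hx0 hx1
  obtain ⟨p2,q2,hp2,hpq2,h12,hmin2,hf2,hg2⟩ := coord y hy0 hy1
  obtain ⟨p3,q3,hp3,hpq3,h13,hmin3,hf3,hg3⟩ := coord z hz0 hz1
  obtain ⟨p4,q4,hp4,hpq4,h14,hmin4,hf4,hg4⟩ := coord w hw0 hw1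
  have hle : gr x * gr y * gr z * gr w ≤ |gr x * gr y * gr z * gr w| := le_abs_self _
  rw [abs_mul, abs_mul, abs_mul, hg1, hg2, hg3, hg4] at hle
  have habs : fr x * fr y * fr z * fr w + gr x * gr y * gr z * gr w ≤
      (p1^3+q1^3)*(p2^3+q2^3)*(p3^3+q3^3)*(p4^3+q4^3)
      + (q1^3-p1^3)*(q2^3-p2^3)*(q3^3-p3^3)*(q4^3-p4^3) := by
    rw [hf1, hf2, hf3, hf4]
    exact add_le_add_right hle _
  have hS := hsum.trans habs
  have hre : ∀ a b c e : ℝ, a*b*c*e = (a*b)*(c*e) := fun a b c e => by ring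
  rw [hre, hre] at hS
  have hM : ((p1^3+q1^3)*(p2^3+q2^3))^2 + ((q1^3-p1^3)*(q2^3-p2^3))^2 ≤ 2 - 8*d^2 :=
    Mlem d p1 q1 p2 q2 hd hd1 hp1 hpq1 h11 hp2 hpq2 h12
      (by rw [hmin1]; exact hxs) (by rw [hmin2]; exact hys)
  have hN : ((p3^3+q3^3)*(p4^3+q4^3))^2 + ((q3^3-p3^3)*(q4^3-p4^3))^2 ≤ 2 :=
    Nlem p3 q3 p4 q4 hp3 hpq3 h13 hp4 hpq4 h14
  exact combine d _ _ _ _ hd hS hM hN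

lemma core2 (d x y z w : ℝ) (hd : 0 < d) (hd1 : d^2 ≤ 1/1000)
    (hx0 : 0 ≤ x) (hx1 : x ≤ 1) (hy0 : 0 ≤ y) (hy1 : y ≤ 1)
    (hz0 : 0 ≤ z) (hz1 : z ≤ 1) (hw0 : 0 ≤ w) (hw1 : w ≤ 1)
    (hxs : min x (1-x) ≤ 1/2 - 3*d)
    (hxs2 : 10*d^2 ≤ min x (1-x))
    (hsum : 2 - 2*d^2 ≤ fr x * fr y * fr z * fr w + gr x * gr y * gr z * gr w) : False := by
  have hdle : d ≤ 1/31 := by nlinarith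
  rcases le_or_gt (min y (1-y)) (1/2 - 3*d) with h | h
  · exact core d y x z w hd hd1 hy0 hy1 hx0 hx1 hz0 hz1 hw0 hw1 h hxs2
      (hsum.trans_eq (by ring))
  · exact core d x y z w hd hd1 hx0 hx1 hy0 hy1 hz0 hz1 hw0 hw1 hxs
      (by nlinarith [h, mul_nonneg (sub_nonneg.2 hdle) hd.le]) hsum

theorem stmt_5 {α : Fin 4 → ℝ} {ε : ℝ}
    (hα0 : ∀ i, 0 ≤ α i) (hα1 : ∀ i, α i ≤ 1)
    (hε0 : 0 < ε) (hε1 : ε ≤ 1 / 1000)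
    (hG : 1 - ε ≤ G α) :
    (∀ i, |α i - 1 / 2| ≤ 3 * Real.sqrt ε) ∨
      (∀ i, min (α i) (1 - α i) ≤ 10 * ε) := by
  by_contra hcon
  push_neg at hcon
  obtain ⟨⟨k, hk⟩, ⟨l, hl⟩⟩ := hcon
  set d := Real.sqrt ε with hdd
  have hd : 0 < d := Real.sqrt_pos.2 hε0
  have hd2 : d^2 = ε := Real.sq_sqrt hε0.le
  have hd1 : d^2 ≤ 1/1000 := by rw [hd2]; linarith
  have hkm : min (α k) (1 - α k) ≤ 1/2 - 3*d := by
    rcases le_or_gt (α k) (1/2) with h | h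
    · have he : |α k - 1/2| = 1/2 - α k := by
        rw [abs_of_nonpos (by linarith)]; ring
      rw [he] at hk
      exact (min_le_left _ _).trans (by linarith)
    · have he : |α k - 1/2| = α k - 1/2 := abs_of_nonneg (by linarith)
      rw [he] at hk
      exact (min_le_right _ _).trans (by linarith)
  have hlm : 10*d^2 ≤ min (α l) (1 - α l) := by rw [hd2]; exact hl.le
  have hsum : 2 - 2*d^2 ≤ fr (α 0) * fr (α 1) * fr (α 2) * fr (α 3)
      + gr (α 0) * gr (α 1) * gr (α 2) * gr (α 3) := by
    rw [hd2]
    have := Gexp α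
    rw [this] at hG
    linarith
  fin_cases k <;> fin_cases l
  · exact core2 d (α 0) (α 1) (α 2) (α 3) hd hd1 (hα0 _) (hα1 _) (hα0 _) (hα1 _)
      (hα0 _) (hα1 _) (hα0 _) (hα1 _) hkm hlm (hsum.trans_eq (by ring))
  · exact core d (α 0) (α 1) (α 2) (α 3) hd hd1 (hα0 _) (hα1 _) (hα0 _) (hα1 _)
      (hα0 _) (hα1 _) (hα0 _) (hα1 _) hkm hlm (hsum.trans_eq (by ring))
  · exact core d (α 0) (α 2) (α 1) (α 3) hd hd1 (hα0 _) (hα1 _) (hα0 _) (hα1 _)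
      (hα0 _) (hα1 _) (hα0 _) (hα1 _) hkm hlm (hsum.trans_eq (by ring))
  · exact core d (α 0) (α 3) (α 1) (α 2) hd hd1 (hα0 _) (hα1 _) (hα0 _) (hα1 _)
      (hα0 _) (hα1 _) (hα0 _) (hα1 _) hkm hlm (hsum.trans_eq (by ring))
  · exact core d (α 1) (α 0) (α 2) (α 3) hd hd1 (hα0 _) (hα1 _) (hα0 _) (hα1 _)
      (hα0 _) (hα1 _) (hα0 _) (hα1 _) hkm hlm (hsum.trans_eq (by ring))
  · exact core2 d (α 1) (α 0) (α 2) (α 3) hd hd1 (hα0 _) (hα1 _) (hα0 _) (hα1 _)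
      (hα0 _) (hα1 _) (hα0 _) (hα1 _) hkm hlm (hsum.trans_eq (by ring))
  · exact core d (α 1) (α 2) (α 0) (α 3) hd hd1 (hα0 _) (hα1 _) (hα0 _) (hα1 _)
      (hα0 _) (hα1 _) (hα0 _) (hα1 _) hkm hlm (hsum.trans_eq (by ring))
  · exact core d (α 1) (α 3) (α 0) (α 2) hd hd1 (hα0 _) (hα1 _) (hα0 _) (hα1 _)
      (hα0 _) (hα1 _) (hα0 _) (hα1 _) hkm hlm (hsum.trans_eq (by ring))
  · exact core d (α 2) (α 0) (α 1) (α 3) hd hd1 (hα0 _) (hα1 _) (hα0 _) (hα1 _)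
      (hα0 _) (hα1 _) (hα0 _) (hα1 _) hkm hlm (hsum.trans_eq (by ring))
  · exact core d (α 2) (α 1) (α 0) (α 3) hd hd1 (hα0 _) (hα1 _) (hα0 _) (hα1 _)
      (hα0 _) (hα1 _) (hα0 _) (hα1 _) hkm hlm (hsum.trans_eq (by ring))
  · exact core2 d (α 2) (α 0) (α 1) (α 3) hd hd1 (hα0 _) (hα1 _) (hα0 _) (hα1 _)
      (hα0 _) (hα1 _) (hα0 _) (hα1 _) hkm hlm (hsum.trans_eq (by ring))
  · exact core d (α 2) (α 3) (α 0) (α 1) hd hd1 (hα0 _) (hα1 _) (hα0 _) (hα1 _)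
      (hα0 _) (hα1 _) (hα0 _) (hα1 _) hkm hlm (hsum.trans_eq (by ring))
  · exact core d (α 3) (α 0) (α 1) (α 2) hd hd1 (hα0 _) (hα1 _) (hα0 _) (hα1 _)
      (hα0 _) (hα1 _) (hα0 _) (hα1 _) hkm hlm (hsum.trans_eq (by ring))
  · exact core d (α 3) (α 1) (α 0) (α 2) hd hd1 (hα0 _) (hα1 _) (hα0 _) (hα1 _)
      (hα0 _) (hα1 _) (hα0 _) (hα1 _) hkm hlm (hsum.trans_eq (by ring))
  · exact core d (α 3) (α 2) (α 0) (α 1) hd hd1 (hα0 _) (hα1 _) (hα0 _) (hα1 _)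
      (hα0 _) (hα1 _) (hα0 _) (hα1 _) hkm hlm (hsum.trans_eq (by ring))
  · exact core2 d (α 3) (α 0) (α 1) (α 2) hd hd1 (hα0 _) (hα1 _) (hα0 _) (hα1 _)
      (hα0 _) (hα1 _) (hα0 _) (hα1 _) hkm hlm (hsum.trans_eq (by ring))
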